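/- arXiv:math/0512571 — 2 statements merged into one kernel-verified Lean document; each statement's English description precedes it below -/
import Mathlib

section
/- For a generic well-poised sequence, the summand F_k(a₁,…,a_{r+1}; q, z) := z^k · ∏_i (a_i;q)_k / [(q;q)_k · ∏_{i=2}^{r+1} (a₁q/a_i;q)_k] satisfies the contiguous relation F_k(a₁,…,a_r q, a_{r+1}) − F_k(a₁,…,a_r, a_{r+1} q) = α · F_{k−1}(a₁q², a₂q, …, a_{r+1}q), where α = (a_r − a_{r+1})(1 − a₁/(a_r a_{r+1}))(1−a₁)(1−a₁q)(1−a₂)⋯(1−a_{r−1}) z / [(1−a₁/a_r)(1−a₁/a_{r+1})(1−a₁q/a₂)⋯(1−a₁q/a_{r+1})]. -/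
/-- The q-shifted factorial `(x;q)_n`. -/
def qPoch {K : Type*} [Field K] (q x : K) (n : ℕ) : K :=
  ∏ j ∈ Finset.range n, (1 - x * q ^ j)

/-- The `k`-th term of a well-poised basic hypergeometric series with
upper parameters `a 1, …, a (r+1)`:
`F_k = z^k ∏_{i=1}^{r+1} (a_i;q)_k / ((q;q)_k ∏_{i=2}^{r+1} (a₁q/a_i;q)_k)`. -/
def wpTerm {K : Type*} [Field K] (q z : K) (r : ℕ) (a : ℕ → K) (k : ℕ) : K :=
  z ^ k * (∏ i ∈ Finset.Icc 1 (r + 1), qPoch q (a i) k) /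
    (qPoch q q k * ∏ i ∈ Finset.Icc 2 (r + 1), qPoch q (a 1 * q / a i) k)

lemma qPoch_succ {K : Type*} [Field K] (q x : K) (n : ℕ) :
    qPoch q x (n + 1) = qPoch q x n * (1 - x * q ^ n) :=
  Finset.prod_range_succ _ _

lemma qPoch_succ' {K : Type*} [Field K] (q x : K) (n : ℕ) :
    qPoch q x (n + 1) = (1 - x) * qPoch q (x * q) n := by
  rw [qPoch, Finset.prod_range_succ', pow_zero, mul_one, mul_comm]
  congr 1
  exact Finset.prod_congr rfl fun j _ => by rw [pow_succ']; ring_nf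

lemma qPoch_factor_ne {K : Type*} [Field K] {q x : K} {n : ℕ}
    (h : qPoch q x n ≠ 0) {j : ℕ} (hj : j < n) : 1 - x * q ^ j ≠ 0 := by
  intro h0
  exact h (Finset.prod_eq_zero (Finset.mem_range.2 hj) h0)

lemma qPoch_ne_zero_of_le {K : Type*} [Field K] {q x : K} {n k : ℕ}
    (h : qPoch q x n ≠ 0) (hk : k ≤ n) : qPoch q x k ≠ 0 := by
  rw [qPoch]
  exact Finset.prod_ne_zero_iff.2 fun j hj =>
    qPoch_factor_ne h (lt_of_lt_of_le (Finset.mem_range.1 hj) hk)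

lemma wpTerm_update {K : Type*} [Field K] (q z : K) (r j : ℕ) (a : ℕ → K) (m : ℕ)
    (hj2 : 2 ≤ j) (hjr : j ≤ r + 1) (hq : q ≠ 0)
    (hQ : qPoch q q (m + 1) ≠ 0)
    (hD : ∀ i ∈ Finset.Icc 2 (r + 1), qPoch q (a 1 * q / a i) (m + 1) ≠ 0)
    (hC : qPoch q (a 1 / a j) (m + 1) ≠ 0) :
    wpTerm q z r (Function.update a j (a j * q)) (m + 1)
      = z ^ (m + 1) * qPoch q (a 1) (m + 1) * (1 - a j * q * q ^ m)
          * (1 - a 1 * q * q ^ m / a j)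
          * (∏ i ∈ (Finset.Icc 2 (r + 1)).erase j, (1 - a i))
          * (∏ i ∈ Finset.Icc 2 (r + 1), qPoch q (a i * q) m)
        / ((1 - a 1 / a j)
            * (qPoch q q (m + 1) * ∏ i ∈ Finset.Icc 2 (r + 1), qPoch q (a 1 * q / a i) (m + 1))) := by
  have hjS : j ∈ Finset.Icc 2 (r + 1) := Finset.mem_Icc.2 ⟨hj2, hjr⟩
  have h1S : (1 : ℕ) ∉ Finset.Icc 2 (r + 1) := by simp
  have hIcc : Finset.Icc 1 (r + 1) = insert 1 (Finset.Icc 2 (r + 1)) := by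
    ext i; simp only [Finset.mem_Icc, Finset.mem_insert]; omega
  have hnum : ∏ i ∈ Finset.Icc 1 (r + 1), qPoch q (Function.update a j (a j * q) i) (m + 1)
      = qPoch q (a 1) (m + 1) * ((qPoch q (a j * q) m * (1 - a j * q * q ^ m))
          * ((∏ i ∈ (Finset.Icc 2 (r + 1)).erase j, (1 - a i))
            * ∏ i ∈ (Finset.Icc 2 (r + 1)).erase j, qPoch q (a i * q) m)) := by
    rw [hIcc, Finset.prod_insert h1S, Function.update_of_ne (show (1 : ℕ) ≠ j by omega),
        ← Finset.mul_prod_erase _ _ hjS, Function.update_self, qPoch_succ q (a j * q) m,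
        Finset.prod_congr rfl (fun i hi => by
          rw [Function.update_of_ne (Finset.ne_of_mem_erase hi), qPoch_succ']),
        Finset.prod_mul_distrib]
  have hden1 : ∏ i ∈ Finset.Icc 2 (r + 1),
        qPoch q (Function.update a j (a j * q) 1 * q / Function.update a j (a j * q) i) (m + 1)
      = qPoch q (a 1 / a j) (m + 1)
          * ∏ i ∈ (Finset.Icc 2 (r + 1)).erase j, qPoch q (a 1 * q / a i) (m + 1) := by
    rw [Function.update_of_ne (show (1 : ℕ) ≠ j by omega),
        ← Finset.mul_prod_erase _ _ hjS, Function.update_self,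
        mul_div_mul_right _ _ hq]
    congr 1
    exact Finset.prod_congr rfl fun i hi => by
      rw [Function.update_of_ne (Finset.ne_of_mem_erase hi)]
  rw [wpTerm, hnum, hden1]
  have hDe : ∏ i ∈ (Finset.Icc 2 (r + 1)).erase j, qPoch q (a 1 * q / a i) (m + 1) ≠ 0 :=
    Finset.prod_ne_zero_iff.2 fun i hi => hD i (Finset.mem_of_mem_erase hi)
  have hDall : ∏ i ∈ Finset.Icc 2 (r + 1), qPoch q (a 1 * q / a i) (m + 1) ≠ 0 :=
    Finset.prod_ne_zero_iff.2 hD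
  have h1aj : 1 - a 1 / a j ≠ 0 := by
    have := qPoch_factor_ne hC (Nat.succ_pos m)
    simpa using this
  have e4 : qPoch q (a 1 / a j) (m + 1) * (1 - a 1 / a j * q ^ (m + 1))
      = (1 - a 1 / a j) * qPoch q (a 1 * q / a j) (m + 1) := by
    rw [← qPoch_succ, qPoch_succ', div_mul_eq_mul_div]
  rw [div_eq_div_iff (mul_ne_zero hQ (mul_ne_zero hC hDe))
    (mul_ne_zero h1aj (mul_ne_zero hQ hDall)),
    ← Finset.mul_prod_erase _ (fun i => qPoch q (a 1 * q / a i) (m + 1)) hjS,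
    ← Finset.mul_prod_erase _ (fun i => qPoch q (a i * q) m) hjS]
  linear_combination (-(z ^ (m + 1) * qPoch q (a 1) (m + 1) * qPoch q (a j * q) m
      * (1 - a j * q * q ^ m) * (∏ i ∈ (Finset.Icc 2 (r + 1)).erase j, (1 - a i))
      * (∏ i ∈ (Finset.Icc 2 (r + 1)).erase j, qPoch q (a i * q) m)
      * qPoch q q (m + 1)
      * (∏ i ∈ (Finset.Icc 2 (r + 1)).erase j, qPoch q (a 1 * q / a i) (m + 1)))) * e4

lemma wpTerm_shift {K : Type*} [Field K] (q z : K) (r : ℕ) (a : ℕ → K) (m : ℕ) (hq : q ≠ 0) :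
    wpTerm q z r (fun i => if i = 1 then a 1 * q ^ 2 else a i * q) m
      = z ^ m * qPoch q (a 1 * q ^ 2) m * (∏ i ∈ Finset.Icc 2 (r + 1), qPoch q (a i * q) m)
        / (qPoch q q m * ∏ i ∈ Finset.Icc 2 (r + 1), qPoch q (a 1 * q ^ 2 / a i) m) := by
  have h1S : (1 : ℕ) ∉ Finset.Icc 2 (r + 1) := by simp
  have hIcc : Finset.Icc 1 (r + 1) = insert 1 (Finset.Icc 2 (r + 1)) := by
    ext i; simp only [Finset.mem_Icc, Finset.mem_insert]; omega
  simp only [wpTerm]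
  rw [hIcc, Finset.prod_insert h1S]
  simp only [reduceIte]
  have e1 : (∏ i ∈ Finset.Icc 2 (r + 1), qPoch q (if i = 1 then a 1 * q ^ 2 else a i * q) m)
      = ∏ i ∈ Finset.Icc 2 (r + 1), qPoch q (a i * q) m :=
    Finset.prod_congr rfl fun i hi => by
      rw [if_neg (by rintro rfl; exact h1S hi)]
  have e2 : (∏ i ∈ Finset.Icc 2 (r + 1),
        qPoch q ((a 1 * q ^ 2) * q / (if i = 1 then a 1 * q ^ 2 else a i * q)) m)
      = ∏ i ∈ Finset.Icc 2 (r + 1), qPoch q (a 1 * q ^ 2 / a i) m :=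
    Finset.prod_congr rfl fun i hi => by
      rw [if_neg (by rintro rfl; exact h1S hi), mul_div_mul_right _ _ hq]
  rw [e1, e2, mul_assoc]

/-- The first contiguous relation for well-poised terms:
`F_k(a₁,…,a_r q, a_{r+1}) − F_k(a₁,…,a_r, a_{r+1} q) = α F_{k−1}(a₁q², a₂q, …, a_{r+1}q)`. -/
theorem wp_contiguous_one {K : Type*} [Field K] (q z : K) (r : ℕ) (a : ℕ → K) (k : ℕ)
    (hr : 2 ≤ r) (hk : 1 ≤ k) (hq : q ≠ 0) (ha : ∀ i, a i ≠ 0)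
    (hqq : qPoch q q k ≠ 0)
    (hden : ∀ i ∈ Finset.Icc 2 (r + 1), qPoch q (a 1 * q / a i) k ≠ 0)
    (hdenr : qPoch q (a 1 / a r) k ≠ 0)
    (hdenr1 : qPoch q (a 1 / a (r + 1)) k ≠ 0)
    (hden' : ∀ i ∈ Finset.Icc 2 (r + 1), qPoch q (a 1 * q ^ 2 / a i) (k - 1) ≠ 0)
    (h5 : 1 - a 1 / a r ≠ 0) (h6 : 1 - a 1 / a (r + 1) ≠ 0)
    (h7 : ∀ i ∈ Finset.Icc 2 (r + 1), 1 - a 1 * q / a i ≠ 0) :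
    wpTerm q z r (Function.update a r (a r * q)) k
      - wpTerm q z r (Function.update a (r + 1) (a (r + 1) * q)) k
    = ((a r - a (r + 1)) * (1 - a 1 / (a r * a (r + 1))) * (1 - a 1) * (1 - a 1 * q) *
          (∏ i ∈ Finset.Icc 2 (r - 1), (1 - a i)) * z) /
        ((1 - a 1 / a r) * (1 - a 1 / a (r + 1)) *
          ∏ i ∈ Finset.Icc 2 (r + 1), (1 - a 1 * q / a i)) *
        wpTerm q z r (fun i => if i = 1 then a 1 * q ^ 2 else a i * q) (k - 1) := by
  obtain ⟨m, rfl⟩ : ∃ m, k = m + 1 := ⟨k - 1, by omega⟩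
  simp only [Nat.add_sub_cancel] at hden' ⊢
  have hW : (∏ i ∈ Finset.Icc 2 (r + 1), (1 - a 1 * q / a i)) ≠ 0 :=
    Finset.prod_ne_zero_iff.2 h7
  have hDall : (∏ i ∈ Finset.Icc 2 (r + 1), qPoch q (a 1 * q / a i) (m + 1)) ≠ 0 :=
    Finset.prod_ne_zero_iff.2 hden
  have hE : (∏ i ∈ Finset.Icc 2 (r + 1), qPoch q (a 1 * q ^ 2 / a i) m) ≠ 0 :=
    Finset.prod_ne_zero_iff.2 hden'
  have hQ' : qPoch q q m ≠ 0 := qPoch_ne_zero_of_le hqq (Nat.le_succ m)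
  have hqT : 1 - q * q ^ m ≠ 0 := qPoch_factor_ne hqq (Nat.lt_succ_self m)
  have hY : (1 - a 1 / a r) * (1 - a 1 / a (r + 1))
      * (qPoch q q (m + 1) * ∏ i ∈ Finset.Icc 2 (r + 1), qPoch q (a 1 * q / a i) (m + 1)) ≠ 0 :=
    mul_ne_zero (mul_ne_zero h5 h6) (mul_ne_zero hqq hDall)
  have hP1 : ∏ i ∈ (Finset.Icc 2 (r + 1)).erase r, (1 - a i)
      = (1 - a (r + 1)) * ∏ i ∈ Finset.Icc 2 (r - 1), (1 - a i) := by
    rw [show (Finset.Icc 2 (r + 1)).erase r = insert (r + 1) (Finset.Icc 2 (r - 1)) by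
          ext i; simp only [Finset.mem_erase, Finset.mem_Icc, Finset.mem_insert]; omega,
        Finset.prod_insert (by simp only [Finset.mem_Icc]; omega)]
  have hP2 : ∏ i ∈ (Finset.Icc 2 (r + 1)).erase (r + 1), (1 - a i)
      = (1 - a r) * ∏ i ∈ Finset.Icc 2 (r - 1), (1 - a i) := by
    rw [show (Finset.Icc 2 (r + 1)).erase (r + 1) = insert r (Finset.Icc 2 (r - 1)) by
          ext i; simp only [Finset.mem_erase, Finset.mem_Icc, Finset.mem_insert]; omega,
        Finset.prod_insert (by simp only [Finset.mem_Icc]; omega)]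
  have hA : qPoch q (a 1) (m + 1) * (1 - a 1 * q ^ (m + 1))
      = (1 - a 1) * (1 - a 1 * q) * qPoch q (a 1 * q ^ 2) m := by
    rw [← qPoch_succ, qPoch_succ', qPoch_succ', show a 1 * q * q = a 1 * q ^ 2 by ring]
    ring
  have hDWE : (∏ i ∈ Finset.Icc 2 (r + 1), qPoch q (a 1 * q / a i) (m + 1))
      = (∏ i ∈ Finset.Icc 2 (r + 1), (1 - a 1 * q / a i))
        * ∏ i ∈ Finset.Icc 2 (r + 1), qPoch q (a 1 * q ^ 2 / a i) m := by
    rw [← Finset.prod_mul_distrib]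
    exact Finset.prod_congr rfl fun i hi => by
      rw [qPoch_succ', show a 1 * q / a i * q = a 1 * q ^ 2 / a i by ring]
  have hQrel : qPoch q q (m + 1) = qPoch q q m * (1 - q * q ^ m) := qPoch_succ q q m
  have hF1 : wpTerm q z r (Function.update a r (a r * q)) (m + 1)
      = (z ^ (m + 1) * qPoch q (a 1) (m + 1) * (1 - a r * q * q ^ m)
          * (1 - a 1 * q * q ^ m / a r)
          * ((1 - a (r + 1)) * ∏ i ∈ Finset.Icc 2 (r - 1), (1 - a i))
          * (∏ i ∈ Finset.Icc 2 (r + 1), qPoch q (a i * q) m) * (1 - a 1 / a (r + 1)))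
        / ((1 - a 1 / a r) * (1 - a 1 / a (r + 1))
            * (qPoch q q (m + 1) * ∏ i ∈ Finset.Icc 2 (r + 1), qPoch q (a 1 * q / a i) (m + 1))) := by
    rw [wpTerm_update q z r r a m hr (by omega) hq hqq hden hdenr, hP1,
        div_eq_div_iff (mul_ne_zero h5 (mul_ne_zero hqq hDall)) hY]
    ring
  have hF2 : wpTerm q z r (Function.update a (r + 1) (a (r + 1) * q)) (m + 1)
      = (z ^ (m + 1) * qPoch q (a 1) (m + 1) * (1 - a (r + 1) * q * q ^ m)
          * (1 - a 1 * q * q ^ m / a (r + 1))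
          * ((1 - a r) * ∏ i ∈ Finset.Icc 2 (r - 1), (1 - a i))
          * (∏ i ∈ Finset.Icc 2 (r + 1), qPoch q (a i * q) m) * (1 - a 1 / a r))
        / ((1 - a 1 / a r) * (1 - a 1 / a (r + 1))
            * (qPoch q q (m + 1) * ∏ i ∈ Finset.Icc 2 (r + 1), qPoch q (a 1 * q / a i) (m + 1))) := by
    rw [wpTerm_update q z r (r + 1) a m (by omega) le_rfl hq hqq hden hdenr1, hP2,
        div_eq_div_iff (mul_ne_zero h6 (mul_ne_zero hqq hDall)) hY]
    ring
  have hRHS : ((a r - a (r + 1)) * (1 - a 1 / (a r * a (r + 1))) * (1 - a 1) * (1 - a 1 * q) *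
          (∏ i ∈ Finset.Icc 2 (r - 1), (1 - a i)) * z) /
        ((1 - a 1 / a r) * (1 - a 1 / a (r + 1)) *
          ∏ i ∈ Finset.Icc 2 (r + 1), (1 - a 1 * q / a i)) *
        wpTerm q z r (fun i => if i = 1 then a 1 * q ^ 2 else a i * q) m
      = ((a r - a (r + 1)) * (1 - a 1 / (a r * a (r + 1)))
          * (∏ i ∈ Finset.Icc 2 (r - 1), (1 - a i)) * z ^ (m + 1)
          * qPoch q (a 1) (m + 1) * (1 - a 1 * q ^ (m + 1))
          * (∏ i ∈ Finset.Icc 2 (r + 1), qPoch q (a i * q) m) * (1 - q * q ^ m))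
        / ((1 - a 1 / a r) * (1 - a 1 / a (r + 1))
            * (qPoch q q (m + 1) * ∏ i ∈ Finset.Icc 2 (r + 1), qPoch q (a 1 * q / a i) (m + 1))) := by
    rw [wpTerm_shift q z r a m hq, div_mul_div_comm,
        div_eq_div_iff (mul_ne_zero (mul_ne_zero (mul_ne_zero h5 h6) hW)
          (mul_ne_zero hQ' hE)) hY, hQrel, hDWE]
    linear_combination (-((a r - a (r + 1)) * (1 - a 1 / (a r * a (r + 1)))
        * (∏ i ∈ Finset.Icc 2 (r - 1), (1 - a i)) * z ^ (m + 1)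
        * (∏ i ∈ Finset.Icc 2 (r + 1), qPoch q (a i * q) m)
        * (1 - a 1 / a r) * (1 - a 1 / a (r + 1)) * qPoch q q m * (1 - q * q ^ m)
        * (∏ i ∈ Finset.Icc 2 (r + 1), (1 - a 1 * q / a i))
        * (∏ i ∈ Finset.Icc 2 (r + 1), qPoch q (a 1 * q ^ 2 / a i) m))) * hA
  rw [hF1, hF2, div_sub_div_same, hRHS]
  congr 1
  have har := ha r
  have har1 := ha (r + 1)
  field_simp
  ring
end

section
/- For nonnegative integers n and r ≥ 1, ∑_{s₁,…,s_r=0}^n ∏_{1≤i<j≤r} [(x_i q^{s_i} − x_j q^{s_j})(1 − a x_i x_j q^{s_i+s_j})]/[(x_i − x_j)(1 − a x_i x_j q^n)] · ∏_{i=1}^r q^{−(r−1)s_i} = (n+1) (q^{n+1};q^{n+1})_{r−1} / [q^{n·r(r−1)/2} (q;q)_{r−1}]. -/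
open Finset

namespace CrOne



/-- Dickson-like coefficients: `1 + u^p = ∑_d gam p d * u^d * (1+u)^(p-2d)`. -/
def gam : ℕ → ℕ → ℤ
  | 0, 0 => 2
  | _+1, 0 => 1
  | 0, _+1 => 0
  | 1, _+1 => 0
  | p+2, d+1 => gam (p+1) (d+1) - gam p d

lemma gam_eq_zero : ∀ p d : ℕ, p < 2*d → gam p d = 0
  | 0, 0, h => by omega
  | _+1, 0, h => by omega
  | 0, _+1, _ => rfl
  | 1, _+1, _ => rfl
  | p+2, d+1, h => by
      rw [gam, gam_eq_zero (p+1) (d+1) (by omega), gam_eq_zero p d (by omega)]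
      ring

variable {R : Type*} [CommRing R]

theorem gam_expand (u : R) : ∀ p : ℕ,
    (1 : R) + u ^ p =
      ∑ d ∈ range (p+1),
        if 2*d ≤ p then (gam p d : R) * u^d * (1+u)^(p - 2*d) else 0
  | 0 => by norm_num [gam]
  | 1 => by
      rw [Finset.sum_range_succ, Finset.sum_range_succ]
      norm_num [gam]
  | (p+2) => by
      have h1 := gam_expand u (p+1)
      have h0 := gam_expand u p
      have key : (1:R) + u^(p+2) = (1+u) * (1 + u^(p+1)) - u * (1 + u^p) := by ring
      have hA : (1+u) * ((1:R) + u^(p+1)) =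
          ∑ d ∈ range (p+3),
            if 2*d ≤ p+2 then (gam (p+1) d : R) * u^d * (1+u)^(p+2 - 2*d) else 0 := by
        rw [show p+3 = (p+2)+1 from rfl, Finset.sum_range_succ, if_neg (by omega), add_zero,
          h1, Finset.mul_sum]
        refine Finset.sum_congr rfl fun d hd => ?_
        by_cases h : 2*d ≤ p+1
        · rw [if_pos h, if_pos (by omega)]
          have : p+2 - 2*d = (p+1 - 2*d) + 1 := by omega
          rw [this, pow_succ]
          ring
        · by_cases h' : 2*d ≤ p+2
          · rw [if_neg h, if_pos h', gam_eq_zero (p+1) d (by omega)]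
            simp
          · rw [if_neg h, if_neg h']
            simp
      have hB : u * ((1:R) + u^p) =
          ∑ d ∈ range (p+3),
            if 1 ≤ d ∧ 2*d ≤ p+2 then (gam p (d-1) : R) * u^d * (1+u)^(p+2 - 2*d) else 0 := by
        rw [show p+3 = (p+2)+1 from rfl, Finset.sum_range_succ, if_neg (by omega), add_zero,
          Finset.sum_range_succ', if_neg (by omega), add_zero, h0, Finset.mul_sum]
        refine Finset.sum_congr rfl fun d hd => ?_
        by_cases h : 2*d ≤ p
        · rw [if_pos h, if_pos (by omega)]
          have e1 : d + 1 - 1 = d := by omega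
          have e2 : p+2 - 2*(d+1) = p - 2*d := by omega
          rw [e1, e2, pow_succ]
          ring
        · rw [if_neg h, if_neg (by omega)]
          simp
      rw [key, hA, hB, ← Finset.sum_sub_distrib]
      refine Finset.sum_congr rfl fun d hd => ?_
      by_cases h1' : 2*d ≤ p+2
      · by_cases h2' : 1 ≤ d
        · obtain ⟨e, rfl⟩ : ∃ e, d = e + 1 := ⟨d - 1, by omega⟩
          rw [if_pos h1', if_pos ⟨h2', h1'⟩, if_pos h1', gam]
          have e1 : e + 1 - 1 = e := by omega
          rw [e1]
          push_cast
          ring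
        · have hd0 : d = 0 := by omega
          subst hd0
          rw [if_pos h1', if_neg (by omega), if_pos h1', sub_zero]
          norm_num [gam]
      · rw [if_neg h1', if_neg (by omega), if_neg h1']
        simp


lemma gam_pos_zero (p : ℕ) (hp : 1 ≤ p) : gam p 0 = 1 := by
  obtain ⟨e, rfl⟩ : ∃ e, p = e + 1 := ⟨p - 1, by omega⟩
  rw [gam]



variable {R : Type*} [CommRing R]

lemma prod_pair_prod {M : Type*} [CommMonoid M] (r : ℕ) (g : Fin r → M) :
    (∏ i : Fin r, ∏ j ∈ Ioi i, (g i * g j)) = ∏ i : Fin r, g i ^ (r - 1) := by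
  have h1 : (∏ i : Fin r, ∏ j ∈ Ioi i, g i) = ∏ i : Fin r, g i ^ (r - 1 - (i : ℕ)) := by
    refine Finset.prod_congr rfl fun i _ => ?_
    rw [Finset.prod_const, Fin.card_Ioi]
  have h2 : (∏ i : Fin r, ∏ j ∈ Ioi i, g j) = ∏ j : Fin r, g j ^ (j : ℕ) := by
    rw [Finset.prod_comm' (t' := Finset.univ) (s' := fun j => Iio j)
      (by intro x y; simp [Finset.mem_Ioi, Finset.mem_Iio])]
    refine Finset.prod_congr rfl fun j _ => ?_
    rw [Finset.prod_const, Fin.card_Iio]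
  calc (∏ i : Fin r, ∏ j ∈ Ioi i, (g i * g j))
      = (∏ i : Fin r, ∏ j ∈ Ioi i, g i) * (∏ i : Fin r, ∏ j ∈ Ioi i, g j) := by
        rw [← Finset.prod_mul_distrib]
        exact Finset.prod_congr rfl fun i _ => Finset.prod_mul_distrib
    _ = ∏ i : Fin r, g i ^ (r - 1 - (i : ℕ)) * g i ^ (i : ℕ) := by
        rw [h1, h2, ← Finset.prod_mul_distrib]
    _ = ∏ i : Fin r, g i ^ (r - 1) := by
        refine Finset.prod_congr rfl fun i _ => ?_
        rw [← pow_add]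
        congr 1
        have := i.isLt
        omega

set_option maxHeartbeats 1000000 in
set_option synthInstance.maxHeartbeats 400000 in
/-- Homogenized Vandermonde determinant, valid over any commutative ring. -/
theorem det_homog_vandermonde (r : ℕ) (f g : Fin r → R) :
    Matrix.det (Matrix.of fun i j : Fin r => f i ^ (j : ℕ) * g i ^ (r - 1 - (j : ℕ))) =
      ∏ i : Fin r, ∏ j ∈ Ioi i, (f j * g i - f i * g j) := by
  -- generic case over a fraction field
  set σ := MvPolynomial (Fin r × Bool) ℤ with hσ
  let F : Fin r → σ := fun i => MvPolynomial.X (i, true)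
  let G : Fin r → σ := fun i => MvPolynomial.X (i, false)
  let L := FractionRing σ
  let φ : σ →+* L := algebraMap σ L
  have hφ : Function.Injective φ := IsFractionRing.injective σ L
  have hG : ∀ i, φ (G i) ≠ 0 := fun i => by
    simp only [ne_eq, map_eq_zero_iff φ hφ]
    exact MvPolynomial.X_ne_zero _
  have generic :
      Matrix.det (Matrix.of fun i j : Fin r => F i ^ (j : ℕ) * G i ^ (r - 1 - (j : ℕ))) =
        ∏ i : Fin r, ∏ j ∈ Ioi i, (F j * G i - F i * G j) := by
    apply hφ
    rw [RingHom.map_det, map_prod]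
    have hmap : φ.mapMatrix (Matrix.of fun i j : Fin r => F i ^ (j : ℕ) * G i ^ (r - 1 - (j : ℕ))) =
        Matrix.of fun i j : Fin r =>
          (φ (G i)) ^ (r - 1) * Matrix.vandermonde (fun i => φ (F i) * (φ (G i))⁻¹) i j := by
      ext i j
      simp only [RingHom.mapMatrix_apply, Matrix.map_apply, Matrix.of_apply, map_mul, map_pow, Matrix.vandermonde_apply]
      have hj : (j : ℕ) ≤ r - 1 := by have := j.isLt; omega
      rw [mul_pow, pow_sub₀ _ (hG i) hj, inv_pow]
      ring
    rw [hmap, Matrix.det_mul_column, Matrix.det_vandermonde]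
    simp only [map_prod, map_sub, map_mul]
    rw [← prod_pair_prod r (fun i => φ (G i)), ← Finset.prod_mul_distrib]
    rw [Finset.prod_congr rfl fun i (_ : i ∈ Finset.univ) => (Finset.prod_mul_distrib).symm]
    refine Finset.prod_congr rfl fun i _ => Finset.prod_congr rfl fun j _ => ?_
    calc φ (G i) * φ (G j) * (φ (F j) * (φ (G j))⁻¹ - φ (F i) * (φ (G i))⁻¹)
        = (φ (G j) * (φ (G j))⁻¹) * (φ (F j) * φ (G i))
          - (φ (G i) * (φ (G i))⁻¹) * (φ (F i) * φ (G j)) := by ring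
      _ = φ (F j) * φ (G i) - φ (F i) * φ (G j) := by
          rw [mul_inv_cancel₀ (hG j), mul_inv_cancel₀ (hG i), one_mul, one_mul]
  -- specialize
  let ψ : σ →+* R := (MvPolynomial.eval₂Hom (Int.castRingHom R)
    (fun v => if v.2 then f v.1 else g v.1))
  have hψF : ∀ i, ψ (F i) = f i := fun i => by rw [show ψ (F i) = MvPolynomial.eval₂Hom (Int.castRingHom R) (fun v => if v.2 then f v.1 else g v.1) (MvPolynomial.X (i, true)) from rfl, MvPolynomial.eval₂Hom_X']; simp
  have hψG : ∀ i, ψ (G i) = g i := fun i => by rw [show ψ (G i) = MvPolynomial.eval₂Hom (Int.castRingHom R) (fun v => if v.2 then f v.1 else g v.1) (MvPolynomial.X (i, false)) from rfl, MvPolynomial.eval₂Hom_X']; simp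
  have := congrArg ψ generic
  rw [RingHom.map_det] at this
  simp only [map_prod, map_sub, map_mul, hψF, hψG] at this
  convert this using 2
  ext i j
  simp only [RingHom.mapMatrix_apply, Matrix.map_apply, Matrix.of_apply, map_mul, map_pow, hψF, hψG]



variable {R : Type*} [CommRing R]


/-- entries of the two-monomial matrix -/
def ent (c z : R) (m : ℕ) (j : ℕ) : R :=
  if j = m then z ^ m else z ^ j + c ^ (m - j) * z ^ (2 * m - j)

theorem det_ent (r : ℕ) (c : R) (y : Fin r → R) :
    Matrix.det (Matrix.of fun i j : Fin r => ent c (y i) (r-1) (j : ℕ)) =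
      ∏ i : Fin r, ∏ j ∈ Ioi i, ((y j - y i) * (1 - c * y i * y j)) := by
  set m := r - 1 with hm
  set M : Matrix (Fin r) (Fin r) R :=
    Matrix.of fun i k : Fin r => (y i) ^ (k : ℕ) * (1 + c * y i ^ 2) ^ (r - 1 - (k : ℕ)) with hM
  set U : Matrix (Fin r) (Fin r) R :=
    Matrix.of fun k j : Fin r =>
      if (j : ℕ) = m then (if k = j then (1:R) else 0)
      else if (j : ℕ) ≤ (k : ℕ) ∧ 2 ∣ ((k : ℕ) - (j : ℕ)) then
        (gam (m - (j:ℕ)) (((k:ℕ) - (j:ℕ))/2) : R) * c ^ (((k:ℕ) - (j:ℕ))/2) else 0 with hU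
  have key : (Matrix.of fun i j : Fin r => ent c (y i) (r-1) (j : ℕ)) = M * U := by
    ext i j
    rw [Matrix.mul_apply]
    by_cases hj : (j : ℕ) = m
    · rw [Finset.sum_eq_single j]
      · simp only [Matrix.of_apply, hM, hU, if_pos hj, ent]
        have h0 : r - 1 - ((j:ℕ)) = 0 := by omega
        have hj2 : (j:ℕ) = r - 1 := by omega
        rw [hj2]
        simp
      · intro k _ hk
        simp only [Matrix.of_apply, hU, if_pos hj, if_neg hk, mul_zero]
      · intro h
        exact absurd (Finset.mem_univ j) h
    · have hjr : (j : ℕ) < r := j.isLt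
      have hjm : (j : ℕ) < m := by
        rcases Nat.lt_or_ge (j:ℕ) m with h | h
        · exact h
        · exfalso; apply hj; omega
      set p := m - (j : ℕ) with hp
      have hp1 : 1 ≤ p := by omega
      set u : R := c * y i ^ 2 with hu
      -- the summand as a function of (k : ℕ)
      have hsum : ∑ k : Fin r, M i k * U k j =
          ∑ kk ∈ range r, ((y i) ^ kk * (1 + u) ^ (m - kk) *
            (if (j:ℕ) ≤ kk ∧ 2 ∣ (kk - (j:ℕ)) then
              (gam p ((kk - (j:ℕ))/2) : R) * c ^ ((kk - (j:ℕ))/2) else 0)) := by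
        rw [← Fin.sum_univ_eq_sum_range]
        refine Finset.sum_congr rfl fun k _ => ?_
        simp only [Matrix.of_apply, hM, hU, if_neg hj, hm, hu, hp, if_neg (show ¬((j:ℕ) = r - 1) by omega)]
      rw [hsum]
      -- restrict to effective support
      have hsupp : ∑ kk ∈ range r, ((y i) ^ kk * (1 + u) ^ (m - kk) *
            (if (j:ℕ) ≤ kk ∧ 2 ∣ (kk - (j:ℕ)) then
              (gam p ((kk - (j:ℕ))/2) : R) * c ^ ((kk - (j:ℕ))/2) else 0)) =
          ∑ kk ∈ (range r).filter
              (fun kk => (j:ℕ) ≤ kk ∧ 2 ∣ (kk - (j:ℕ)) ∧ kk - (j:ℕ) ≤ p), ((y i) ^ kk * (1 + u) ^ (m - kk) *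
            (if (j:ℕ) ≤ kk ∧ 2 ∣ (kk - (j:ℕ)) then
              (gam p ((kk - (j:ℕ))/2) : R) * c ^ ((kk - (j:ℕ))/2) else 0)) := by
        refine (Finset.sum_filter_of_ne fun kk hkk hne => ?_).symm
        by_contra hcond
        apply hne
        by_cases h1 : (j:ℕ) ≤ kk ∧ 2 ∣ (kk - (j:ℕ))
        · have h2 : ¬ (kk - (j:ℕ) ≤ p) := by tauto
          rw [if_pos h1, gam_eq_zero p ((kk - (j:ℕ))/2) (by omega)]
          simp
        · rw [if_neg h1]
          simp
      rw [hsupp]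
      -- reindex via kk = j + 2 d
      have hbij : ∑ kk ∈ (range r).filter
              (fun kk => (j:ℕ) ≤ kk ∧ 2 ∣ (kk - (j:ℕ)) ∧ kk - (j:ℕ) ≤ p), ((y i) ^ kk * (1 + u) ^ (m - kk) *
            (if (j:ℕ) ≤ kk ∧ 2 ∣ (kk - (j:ℕ)) then
              (gam p ((kk - (j:ℕ))/2) : R) * c ^ ((kk - (j:ℕ))/2) else 0)) =
          ∑ d ∈ (range (p+1)).filter (fun d => 2*d ≤ p),
            ((gam p d : R) * u^d * (1+u)^(p - 2*d)) * (y i) ^ (j:ℕ) := by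
        refine Finset.sum_nbij' (fun kk => (kk - (j:ℕ))/2) (fun d => (j:ℕ) + 2*d) ?_ ?_ ?_ ?_ ?_
        · intro kk hkk
          simp only [Finset.mem_filter, Finset.mem_range] at hkk ⊢
          omega
        · intro d hd
          simp only [Finset.mem_filter, Finset.mem_range] at hd ⊢
          refine ⟨by omega, by omega, ⟨d, by omega⟩, by omega⟩
        · intro kk hkk
          simp only [Finset.mem_filter, Finset.mem_range] at hkk
          omega
        · intro d hd
          simp only [Finset.mem_filter, Finset.mem_range] at hd
          omega
        · intro kk hkk
          simp only [Finset.mem_filter, Finset.mem_range] at hkk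
          obtain ⟨hkr, hjk, ⟨d, hd⟩, hkp⟩ := hkk
          rw [if_pos ⟨hjk, ⟨d, hd⟩⟩]
          have e1 : (kk - (j:ℕ))/2 = d := by omega
          have e3 : m - kk = p - 2*d := by omega
          rw [e1, e3]
          have e2 : kk = (j:ℕ) + 2*d := by omega
          rw [e2, hu, pow_add, mul_pow, pow_mul]
          ring
      rw [hbij, ← Finset.sum_mul, Finset.sum_filter, ← gam_expand]
      -- final: ent value
      simp only [Matrix.of_apply]
      have hj2 : ¬ ((j:ℕ) = r - 1) := by omega
      rw [ent, if_neg hj2, hu]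
      have e4 : 2 * (r-1) - (j:ℕ) = (j:ℕ) + 2*p := by omega
      have e5 : (r-1) - (j:ℕ) = p := by omega
      rw [e4, e5, mul_pow, ← pow_mul, pow_add]
      ring
  rw [key, Matrix.det_mul]
  have hdetM : M.det = ∏ i : Fin r, ∏ j ∈ Ioi i, ((y j - y i) * (1 - c * y i * y j)) := by
    rw [hM, det_homog_vandermonde r y (fun i => 1 + c * y i ^ 2)]
    refine Finset.prod_congr rfl fun i _ => Finset.prod_congr rfl fun j _ => ?_
    ring
  have hdetU : U.det = 1 := by
    have htri : U.BlockTriangular OrderDual.toDual := by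
      intro k j h
      have hkj : (k:ℕ) < (j:ℕ) := h
      simp only [hU, Matrix.of_apply]
      by_cases hj : (j : ℕ) = m
      · rw [if_pos hj, if_neg (by intro hc; subst hc; omega)]
      · rw [if_neg hj, if_neg (by omega)]
    rw [Matrix.det_of_lowerTriangular U htri]
    refine Finset.prod_eq_one fun j _ => ?_
    simp only [hU, Matrix.of_apply]
    by_cases hj : (j : ℕ) = m
    · rw [if_pos hj]
      simp
    · have hjm : (j : ℕ) < m := by have := j.isLt; omega
      rw [if_neg hj, if_pos ⟨le_refl _, by simp⟩]
      simp only [Nat.sub_self, Nat.zero_div, pow_zero, mul_one]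
      rw [gam_pos_zero (m - (j:ℕ)) (by omega)]
      simp
  rw [hdetM, hdetU, mul_one]


lemma ent_eq {R : Type*} [CommRing R] (c z : R) (m j : ℕ) :
    ent c z m j = if j = m then z ^ m else z ^ j + c ^ (m - j) * z ^ (2 * m - j) := rfl



noncomputable section

variable {K : Type*} [Field K]


/-- Column sums: geometric series evaluation. -/
theorem colsum (q a z : K) (hq : q ≠ 0) (m n jj : ℕ) (hjj : jj ≤ m) :
    ∑ t ∈ range (n+1), q ^ (-((m * t : ℕ) : ℤ)) * ent a (z * q^t) m jj
      = ((q^(n*(m-jj)))⁻¹ * ∑ t ∈ range (n+1), (q^(m-jj))^t) * ent (a*q^n) z m jj := by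
  by_cases hj : jj = m
  · subst hj
    have hL : ∀ t ∈ range (n+1), q ^ (-((jj * t : ℕ) : ℤ)) * ent a (z * q^t) jj jj
        = z ^ jj := by
      intro t ht
      rw [zpow_neg, zpow_natCast, ent_eq, if_pos rfl]
      field_simp
      ring
    rw [Finset.sum_congr rfl hL, ent_eq, if_pos rfl, Nat.sub_self]
    simp [Finset.sum_const, nsmul_eq_mul]
    try ring
  · obtain ⟨k, hk1, rfl⟩ : ∃ k, 1 ≤ k ∧ m = jj + k := ⟨m - jj, by omega, by omega⟩
    have hqk : (q:K)^k ≠ 0 := pow_ne_zero _ hq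
    have hsub : jj + k - jj = k := by omega
    have h2m : 2 * (jj + k) - jj = jj + 2*k := by omega
    have hterm : ∀ t, q ^ (-(((jj+k) * t : ℕ) : ℤ)) * ent a (z * q^t) (jj+k) jj
        = z^jj * ((q^k)⁻¹)^t + (a^k * z^(jj + 2*k)) * (q^k)^t := by
      intro t
      rw [zpow_neg, zpow_natCast, ent_eq, if_neg hj, hsub, h2m]
      field_simp
      have hqi : q ^ (t*k) * q⁻¹ ^ (t*k) = 1 := by rw [← mul_pow, mul_inv_cancel₀ hq, one_pow]
      linear_combination (-(z ^ jj * q ^ (t * jj))) * hqi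
    rw [Finset.sum_congr rfl (fun t _ => hterm t), Finset.sum_add_distrib,
      ← Finset.mul_sum, ← Finset.mul_sum]
    have hrefl : ∑ t ∈ range (n+1), ((q^k)⁻¹)^t
        = (q^(n*k))⁻¹ * ∑ t ∈ range (n+1), (q^k)^t := by
      rw [Finset.mul_sum, ← Finset.sum_range_reflect]
      refine Finset.sum_congr rfl fun t ht => ?_
      rw [Finset.mem_range] at ht
      have e3 : n + 1 - 1 - t = n - t := by omega
      rw [e3, inv_pow, pow_sub₀ _ hqk (by omega : t ≤ n), mul_comm n k, pow_mul]
      field_simp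
    rw [hrefl, ent_eq, if_neg hj, hsub, h2m]
    have e4 : (a * q^n)^k = a^k * q^(n*k) := by rw [mul_pow, ← pow_mul]
    rw [e4]
    set S := ∑ t ∈ range (n+1), (q^k)^t with hS
    field_simp

end


end CrOne

open CrOne in
/-- The first `C_r` evaluation allied to Schlosser's sum. -/
theorem cr_sum_eval_one {K : Type*} [Field K] (q a : K) (r n : ℕ)
    (x : Fin r → K) (hr : 1 ≤ r) (hq : q ≠ 0)
    (hxx : ∀ i j, i ≠ j → x i ≠ x j)
    (haxx : ∀ i j : Fin r, 1 - a * x i * x j * q ^ n ≠ 0)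
    (hqq : qPoch q q (r - 1) ≠ 0) :
    ∑ s ∈ Fintype.piFinset (fun _ : Fin r => Finset.range (n + 1)),
      (∏ i : Fin r, ∏ j ∈ Finset.Ioi i,
          ((x i * q ^ s i - x j * q ^ s j) * (1 - a * x i * x j * q ^ (s i + s j))) /
            ((x i - x j) * (1 - a * x i * x j * q ^ n))) *
      ∏ i : Fin r, q ^ (-(((r - 1) * s i : ℕ) : ℤ))
    = ((n : K) + 1) * qPoch (q ^ (n + 1)) (q ^ (n + 1)) (r - 1) /
        (q ^ (n * (r * (r - 1) / 2)) * qPoch q q (r - 1)) := by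
  classical
  set D : K := ∏ i : Fin r, ∏ j ∈ Ioi i, ((x j - x i) * (1 - (a*q^n) * x i * x j)) with hD
  have hDne : D ≠ 0 := by
    rw [hD, Finset.prod_ne_zero_iff]
    intro i _
    rw [Finset.prod_ne_zero_iff]
    intro j hj
    have hij : i < j := Finset.mem_Ioi.mp hj
    refine mul_ne_zero (sub_ne_zero.mpr (hxx j i (ne_of_gt hij))) ?_
    intro hc
    exact haxx i j (by linear_combination hc)
  -- Step A : rewrite each summand as a single quotient
  have hsummand : ∀ s : Fin r → ℕ,
      (∏ i : Fin r, ∏ j ∈ Finset.Ioi i,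
          ((x i * q ^ s i - x j * q ^ s j) * (1 - a * x i * x j * q ^ (s i + s j))) /
            ((x i - x j) * (1 - a * x i * x j * q ^ n)))
      = (∏ i : Fin r, ∏ j ∈ Ioi i,
          ((x j * q^(s j) - x i * q^(s i)) * (1 - a * (x i * q^(s i)) * (x j * q^(s j))))) / D := by
    intro s
    rw [hD, ← Finset.prod_div_distrib]
    refine Finset.prod_congr rfl fun i _ => ?_
    rw [← Finset.prod_div_distrib]
    refine Finset.prod_congr rfl fun j hj => ?_
    rw [show (x j * q^(s j) - x i * q^(s i)) * (1 - a * (x i * q^(s i)) * (x j * q^(s j)))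
        = -(((x i * q ^ s i - x j * q ^ s j) * (1 - a * x i * x j * q ^ (s i + s j)))) from by
          rw [pow_add]; ring,
      show (x j - x i) * (1 - (a*q^n) * x i * x j)
        = -((x i - x j) * (1 - a * x i * x j * q ^ n)) from by ring,
      neg_div_neg_eq]
  -- row data
  set g : Fin r → ℕ → (Fin r → K) := fun i t =>
    fun j => q ^ (-(((r-1) * t : ℕ) : ℤ)) * ent a (x i * q^t) (r-1) (j : ℕ) with hg
  have hdet : ∀ v : Fin r → Fin r → K,
      Matrix.detRowAlternating (R := K) (n := Fin r) v = Matrix.det (Matrix.of fun i j => v i j) :=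
    fun _ => rfl
  -- Step B : numerator * weight = determinant
  have hB : ∀ s : Fin r → ℕ,
      (∏ i : Fin r, ∏ j ∈ Ioi i,
          ((x j * q^(s j) - x i * q^(s i)) * (1 - a * (x i * q^(s i)) * (x j * q^(s j))))) *
        (∏ i : Fin r, q ^ (-(((r - 1) * s i : ℕ) : ℤ)))
      = Matrix.detRowAlternating (R := K) (n := Fin r) (fun i => g i (s i)) := by
    intro s
    rw [← det_ent r a (fun i => x i * q^(s i))]
    rw [mul_comm, ← Matrix.det_mul_column (fun i => q ^ (-(((r - 1) * s i : ℕ) : ℤ)))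
      (Matrix.of fun i j : Fin r => ent a (x i * q^(s i)) (r-1) (j : ℕ))]
    rfl
  -- Step C : exchange sum and determinant
  have hC : ∑ s ∈ Fintype.piFinset (fun _ : Fin r => Finset.range (n + 1)),
      Matrix.detRowAlternating (R := K) (n := Fin r) (fun i => g i (s i))
      = Matrix.detRowAlternating (R := K) (n := Fin r)
          (fun i => ∑ t ∈ range (n+1), g i t) :=
    ((Matrix.detRowAlternating (R := K) (n := Fin r)).toMultilinearMap.map_sum_finset
      g (fun _ : Fin r => range (n+1))).symm
  -- Step D : evaluate the column sums
  have hDcol : (fun i => ∑ t ∈ range (n+1), g i t)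
      = fun i => (fun j : Fin r => ((q^(n*((r-1)-(j:ℕ))))⁻¹ * ∑ t ∈ range (n+1), (q^((r-1)-(j:ℕ)))^t)
          * ent (a*q^n) (x i) (r-1) (j:ℕ)) := by
    funext i
    funext j
    rw [Finset.sum_apply]
    simp only [hg]
    exact colsum q a (x i) hq (r-1) n (j:ℕ) (by have := j.isLt; omega)
  -- Step E : final determinant
  have hE : Matrix.detRowAlternating (R := K) (n := Fin r)
        (fun i => ∑ t ∈ range (n+1), g i t)
      = (∏ j : Fin r, ((q^(n*((r-1)-(j:ℕ))))⁻¹ * ∑ t ∈ range (n+1), (q^((r-1)-(j:ℕ)))^t)) * D := by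
    rw [hDcol, hdet]
    have h := Matrix.det_mul_row
      (fun j : Fin r => ((q^(n*((r-1)-(j:ℕ))))⁻¹ * ∑ t ∈ range (n+1), (q^((r-1)-(j:ℕ)))^t))
      (Matrix.of fun i j : Fin r => ent (a*q^n) (x i) (r-1) (j : ℕ))
    rw [det_ent r (a*q^n) x, ← hD] at h
    exact h
  -- assemble
  have hmain : ∑ s ∈ Fintype.piFinset (fun _ : Fin r => Finset.range (n + 1)),
      (∏ i : Fin r, ∏ j ∈ Finset.Ioi i,
          ((x i * q ^ s i - x j * q ^ s j) * (1 - a * x i * x j * q ^ (s i + s j))) /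
            ((x i - x j) * (1 - a * x i * x j * q ^ n))) *
      ∏ i : Fin r, q ^ (-(((r - 1) * s i : ℕ) : ℤ))
      = ∏ j : Fin r, ((q^(n*((r-1)-(j:ℕ))))⁻¹ * ∑ t ∈ range (n+1), (q^((r-1)-(j:ℕ)))^t) := by
    calc ∑ s ∈ Fintype.piFinset (fun _ : Fin r => Finset.range (n + 1)),
        (∏ i : Fin r, ∏ j ∈ Finset.Ioi i,
          ((x i * q ^ s i - x j * q ^ s j) * (1 - a * x i * x j * q ^ (s i + s j))) /
            ((x i - x j) * (1 - a * x i * x j * q ^ n))) *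
        ∏ i : Fin r, q ^ (-(((r - 1) * s i : ℕ) : ℤ))
        = ∑ s ∈ Fintype.piFinset (fun _ : Fin r => Finset.range (n + 1)),
            ((∏ i : Fin r, ∏ j ∈ Ioi i,
              ((x j * q^(s j) - x i * q^(s i)) * (1 - a * (x i * q^(s i)) * (x j * q^(s j))))) *
            (∏ i : Fin r, q ^ (-(((r - 1) * s i : ℕ) : ℤ)))) / D := by
          refine Finset.sum_congr rfl fun s _ => ?_
          rw [hsummand s, div_mul_eq_mul_div]
      _ = (∑ s ∈ Fintype.piFinset (fun _ : Fin r => Finset.range (n + 1)),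
            (∏ i : Fin r, ∏ j ∈ Ioi i,
              ((x j * q^(s j) - x i * q^(s i)) * (1 - a * (x i * q^(s i)) * (x j * q^(s j))))) *
            (∏ i : Fin r, q ^ (-(((r - 1) * s i : ℕ) : ℤ)))) / D := by
          rw [Finset.sum_div]
      _ = ((∏ j : Fin r, ((q^(n*((r-1)-(j:ℕ))))⁻¹ * ∑ t ∈ range (n+1), (q^((r-1)-(j:ℕ)))^t)) * D) / D := by
          rw [Finset.sum_congr rfl fun s _ => hB s, hC, hE]
      _ = ∏ j : Fin r, ((q^(n*((r-1)-(j:ℕ))))⁻¹ * ∑ t ∈ range (n+1), (q^((r-1)-(j:ℕ)))^t) := by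
          rw [mul_div_assoc, div_self hDne, mul_one]
  rw [hmain]
  -- Step F : evaluate the product of coefficients
  rw [Finset.prod_mul_distrib]
  have hP1 : (∏ j : Fin r, ((q:K)^(n*((r-1)-(j:ℕ))))⁻¹) = (q ^ (n * (r * (r - 1) / 2)))⁻¹ := by
    rw [Fin.prod_univ_eq_prod_range (fun jj => ((q:K)^(n*(r-1-jj)))⁻¹) r,
      Finset.prod_range_reflect (fun jj => ((q:K)^(n*jj))⁻¹) r]
    rw [Finset.prod_inv_distrib, Finset.prod_pow_eq_pow_sum, ← Finset.mul_sum,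
      Finset.sum_range_id]
  have hP2 : (∏ j : Fin r, ∑ t ∈ range (n+1), ((q:K)^((r-1)-(j:ℕ)))^t)
      = ((n:K)+1) * (qPoch (q ^ (n + 1)) (q ^ (n + 1)) (r - 1) / qPoch q q (r - 1)) := by
    rw [Fin.prod_univ_eq_prod_range (fun jj => ∑ t ∈ range (n+1), ((q:K)^(r-1-jj))^t) r,
      Finset.prod_range_reflect (fun jj => ∑ t ∈ range (n+1), ((q:K)^jj)^t) r]
    conv_lhs => rw [show r = (r-1)+1 from by omega]
    rw [Finset.prod_range_succ']
    have hzero : ∑ t ∈ range (n+1), ((q:K)^0)^t = (n:K)+1 := by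
      simp
    rw [hzero]
    have hne1 : ∀ k ∈ range (r-1), (1:K) - q^(k+1) ≠ 0 := by
      intro k hk
      have h0 := (Finset.prod_ne_zero_iff.mp hqq) k hk
      intro hc
      apply h0
      rw [show q * q^k = q^(k+1) from by rw [pow_succ, mul_comm]]
      exact hc
    have hfac : ∀ k ∈ range (r-1), ∑ t ∈ range (n+1), ((q:K)^(k+1))^t
        = (1 - (q^(n+1))^(k+1)) / (1 - q^(k+1)) := by
      intro k hk
      have hx1 : (q:K)^(k+1) ≠ 1 := by
        intro hc
        exact hne1 k hk (by rw [hc]; ring)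
      rw [geom_sum_eq hx1 (n+1), ← pow_mul, mul_comm (k+1) (n+1), pow_mul,
        ← neg_sub (1:K) ((q^(n+1))^(k+1)), ← neg_sub (1:K) (q^(k+1)), neg_div_neg_eq]
    rw [Finset.prod_congr rfl hfac, Finset.prod_div_distrib]
    have hq2 : (∏ k ∈ range (r-1), ((1:K) - ((q:K)^(n+1))^(k+1)))
        = qPoch (q ^ (n + 1)) (q ^ (n + 1)) (r - 1) := by
      rw [qPoch]
      refine Finset.prod_congr rfl fun k _ => ?_
      rw [pow_succ, mul_comm (((q:K)^(n+1))^k) ((q:K)^(n+1))]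
    have hq1 : (∏ k ∈ range (r-1), ((1:K) - (q:K)^(k+1))) = qPoch q q (r - 1) := by
      rw [qPoch]
      refine Finset.prod_congr rfl fun k _ => ?_
      rw [pow_succ, mul_comm ((q:K)^k) q]
    rw [hq2, hq1]
    ring
  rw [hP1, hP2]
  have hE0 : (q:K) ^ (n * (r * (r - 1) / 2)) ≠ 0 := pow_ne_zero _ hq
  field_simp
end
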